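/- arXiv:2407.19864 — 4 statements merged into one kernel-verified Lean document; each statement's English description precedes it below -/
import Mathlib

section
/- For the Newton basis generated by distinct points x_1,…,x_n, the kernel matrix admits the factorization K(x_i,x_j) = Σ_{m=1}^{min(i,j)} N_m(x_i) N_m(x_j) for all 1 ≤ i,j ≤ n; i.e., the lower triangular matrix L with entries L_{im} = N_m(x_i) for m ≤ i (and 0 otherwise) gives a Cholesky factorization K = L Lᵀ of the kernel matrix. -/
open Finset Matrix in
/-- Newton basis Cholesky factorization of the kernel matrix:
`K(x_i,x_j) = Σ_{m=1}^{min(i,j)} N_m(x_i) N_m(x_j)`, i.e. the lower triangular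
matrix `L` with `L_{im} = N_m(x_i)` for `m ≤ i` satisfies `K = L Lᵀ`. -/
theorem newton_basis_cholesky
    {Ω : Type*} (K : Ω → Ω → ℝ) (n : ℕ) (x : ℕ → Ω)
    (hsym : ∀ a b : Ω, K a b = K b a)
    (hdist : ∀ i k : ℕ, 1 ≤ i → i ≤ n → 1 ≤ k → k ≤ n → x i = x k → i = k)
    (hPD : (Matrix.of fun i j : Fin n => K (x ((i : ℕ) + 1)) (x ((j : ℕ) + 1))).PosDef)
    (Kj : ℕ → Ω → Ω → ℝ) (N : ℕ → Ω → ℝ)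
    (hK1 : ∀ a b : Ω, Kj 1 a b = K a b)
    (hrec : ∀ j : ℕ, 1 ≤ j → Kj j (x j) (x j) ≠ 0 → ∀ a b : Ω,
      Kj (j + 1) a b
        = Kj j a b - Kj j a (x j) * Kj j (x j) b / Kj j (x j) (x j))
    (hN : ∀ j : ℕ, 1 ≤ j → ∀ a : Ω,
      N j a = Kj j a (x j) / Real.sqrt (Kj j (x j) (x j))) :
    (∀ i j : ℕ, 1 ≤ i → i ≤ n → 1 ≤ j → j ≤ n →
      K (x i) (x j) = ∑ m ∈ Finset.Icc 1 (min i j), N m (x i) * N m (x j)) ∧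
    (Matrix.of fun i j : Fin n => K (x ((i : ℕ) + 1)) (x ((j : ℕ) + 1)))
      = (Matrix.of fun i m : Fin n => if (m : ℕ) ≤ (i : ℕ)
            then N ((m : ℕ) + 1) (x ((i : ℕ) + 1)) else 0)
        * (Matrix.of fun i m : Fin n => if (m : ℕ) ≤ (i : ℕ)
            then N ((m : ℕ) + 1) (x ((i : ℕ) + 1)) else 0)ᵀ := by
  classical
  -- sum conversion helper
  have hIccFin : ∀ f : ℕ → ℝ, (∑ i ∈ Finset.Icc 1 n, f i) = ∑ i : Fin n, f ((i : ℕ) + 1) := by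
    intro f
    rw [← Finset.Ico_add_one_right_eq_Icc, Finset.sum_Ico_eq_sum_range]
    rw [Fin.sum_univ_eq_sum_range (fun i => f (i + 1)) n]
    exact Finset.sum_congr rfl (fun i _ => by rw [Nat.add_comm])
  have hins : ∀ j, j ≤ n → Finset.Icc j n = insert j (Finset.Icc (j + 1) n) := by
    intro j h; rw [Finset.Icc_add_one_left_eq_Ioc, Finset.Ioc_insert_left h]
  have hnm : ∀ j, j ∉ Finset.Icc (j + 1) n := fun j => by simp
  -- the main induction: symmetry and positive-definiteness at each level
  have main : ∀ j : ℕ, j ≤ n →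
      (∀ a b, Kj (j + 1) a b = Kj (j + 1) b a) ∧
      (∀ c : ℕ → ℝ, (∃ i, j + 1 ≤ i ∧ i ≤ n ∧ c i ≠ 0) →
        0 < ∑ i ∈ Finset.Icc (j + 1) n, ∑ k ∈ Finset.Icc (j + 1) n,
            c i * c k * Kj (j + 1) (x i) (x k)) := by
    intro j
    induction j with
    | zero =>
      intro _
      refine ⟨fun a b => by rw [hK1, hK1, hsym], ?_⟩
      rintro c ⟨i0, hi1, hin, hc0⟩
      have hv : (fun k : Fin n => c ((k : ℕ) + 1)) ≠ 0 := by
        intro h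
        apply hc0
        have := congrFun h ⟨i0 - 1, by omega⟩
        simpa [Nat.sub_add_cancel hi1] using this
      have hq := hPD.dotProduct_mulVec_pos hv
      simp only [star_trivial] at hq
      have heq : ∑ i ∈ Finset.Icc 1 n, ∑ k ∈ Finset.Icc 1 n,
          c i * c k * Kj 1 (x i) (x k)
          = (fun k : Fin n => c ((k : ℕ) + 1)) ⬝ᵥ
            ((Matrix.of fun i j : Fin n => K (x ((i : ℕ) + 1)) (x ((j : ℕ) + 1))) *ᵥ
              (fun k : Fin n => c ((k : ℕ) + 1))) := by
        simp only [dotProduct, mulVec, Matrix.of_apply, Finset.mul_sum]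
        rw [hIccFin]
        refine Finset.sum_congr rfl fun i _ => ?_
        rw [hIccFin]
        exact Finset.sum_congr rfl fun k _ => by rw [hK1]; ring
      rw [show (0:ℕ) + 1 = 1 from rfl, heq]
      exact hq
    | succ j ih =>
      intro hjn
      obtain ⟨ihsym, ihpd⟩ := ih (by omega)
      have hd : 0 < Kj (j + 1) (x (j + 1)) (x (j + 1)) := by
        have h := ihpd (fun i => if i = j + 1 then 1 else 0)
          ⟨j + 1, le_refl _, hjn, by simp⟩
        simpa [ite_mul, mul_ite, Finset.sum_ite_eq', Finset.mem_Icc, hjn] using h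
      have hne := ne_of_gt hd
      have hrec' := hrec (j + 1) (by omega) hne
      refine ⟨fun a b => by rw [hrec' a b, hrec' b a, ihsym a b, ihsym a (x (j+1)),
        ihsym (x (j+1)) b]; ring, ?_⟩
      rintro c ⟨i0, hi0, hi0n, hc0⟩
      set d := Kj (j + 1) (x (j + 1)) (x (j + 1)) with hdj
      set I := Finset.Icc (j + 1 + 1) n with hIdef
      set s := ∑ k ∈ I, c k * Kj (j + 1) (x k) (x (j + 1)) with hs
      set T := ∑ i ∈ I, ∑ k ∈ I, c i * c k * Kj (j + 1) (x i) (x k) with hT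
      set c' : ℕ → ℝ := fun i => if i = j + 1 then -s / d else c i with hc'def
      have hcI : ∀ i ∈ I, c' i = c i := by
        intro i hi
        simp only [hc'def]
        rw [if_neg]
        simp only [hIdef, Finset.mem_Icc] at hi
        omega
      have hq := ihpd c' ⟨i0, by omega, hi0n, by
        simpa [hc'def, show i0 ≠ j + 1 by omega] using hc0⟩
      -- Claim A : quadratic form of c' at level j+1 equals T - s*s/d
      have hsum1 : ∑ k ∈ I, c' (j+1) * c' k * Kj (j + 1) (x (j+1)) (x k) = c' (j+1) * s := by
        rw [hs, Finset.mul_sum]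
        refine Finset.sum_congr rfl fun k hk => ?_
        rw [hcI k hk, ihsym (x (j+1)) (x k)]; ring
      have hsum2 : ∑ i ∈ I, c' i * c' (j+1) * Kj (j + 1) (x i) (x (j+1)) = c' (j+1) * s := by
        rw [hs, Finset.mul_sum]
        refine Finset.sum_congr rfl fun i hi => ?_
        rw [hcI i hi]; ring
      have claimA : ∑ i ∈ Finset.Icc (j + 1) n, ∑ k ∈ Finset.Icc (j + 1) n,
          c' i * c' k * Kj (j + 1) (x i) (x k) = T - s * s / d := by
        rw [hins (j + 1) hjn, Finset.sum_insert (hnm (j + 1)),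
          Finset.sum_insert (hnm (j + 1)), hsum1]
        have : ∀ i ∈ I, (c' i * c' (j+1) * Kj (j + 1) (x i) (x (j+1))
            + ∑ k ∈ I, c' i * c' k * Kj (j + 1) (x i) (x k))
            = c' i * c' (j+1) * Kj (j + 1) (x i) (x (j+1))
              + ∑ k ∈ I, c i * c k * Kj (j + 1) (x i) (x k) := by
          intro i hi
          congr 1
          exact Finset.sum_congr rfl fun k hk => by rw [hcI i hi, hcI k hk]
        calc c' (j+1) * c' (j+1) * Kj (j + 1) (x (j+1)) (x (j+1)) + c' (j+1) * s
              + ∑ i ∈ I, ∑ k ∈ insert (j+1) I, c' i * c' k * Kj (j + 1) (x i) (x k)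
            = c' (j+1) * c' (j+1) * d + c' (j+1) * s
              + ∑ i ∈ I, (c' i * c' (j+1) * Kj (j + 1) (x i) (x (j+1))
                + ∑ k ∈ I, c i * c k * Kj (j + 1) (x i) (x k)) := by
              rw [← hdj]
              congr 1
              refine Finset.sum_congr rfl fun i hi => ?_
              rw [Finset.sum_insert (hnm (j + 1)), this i hi]
          _ = c' (j+1) * c' (j+1) * d + c' (j+1) * s + (c' (j+1) * s + T) := by
              rw [Finset.sum_add_distrib, hsum2, hT]
          _ = T - s * s / d := by
              have : c' (j+1) = -s / d := by simp [hc'def]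
              rw [this]; field_simp; ring
      -- Claim B : quadratic form of c at level j+2 equals T - s*s/d
      have claimB : ∑ i ∈ I, ∑ k ∈ I, c i * c k * Kj (j + 1 + 1) (x i) (x k)
          = T - s * s / d := by
        have hinner : ∀ i ∈ I, ∑ k ∈ I, c i * c k * Kj (j + 1 + 1) (x i) (x k)
            = (∑ k ∈ I, c i * c k * Kj (j + 1) (x i) (x k))
              - (c i * Kj (j + 1) (x i) (x (j+1)) / d) * s := by
          intro i _
          rw [hs, Finset.mul_sum, ← Finset.sum_sub_distrib]
          refine Finset.sum_congr rfl fun k _ => ?_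
          rw [hrec' (x i) (x k), ihsym (x (j+1)) (x k)]
          field_simp
        rw [Finset.sum_congr rfl hinner, Finset.sum_sub_distrib, ← hT,
          ← Finset.sum_mul]
        have : ∑ i ∈ I, c i * Kj (j + 1) (x i) (x (j+1)) / d = s / d := by
          rw [← Finset.sum_div, hs]
        rw [this]
        ring
      rw [claimA] at hq
      rw [claimB]
      exact hq
  -- positivity of the pivots
  have hdpos : ∀ j, 1 ≤ j → j ≤ n → 0 < Kj j (x j) (x j) := by
    intro j h1 hjn
    have h := (main (j - 1) (by omega)).2 (fun i => if i = j then 1 else 0)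
      ⟨j, by omega, hjn, by simp⟩
    rw [show j - 1 + 1 = j by omega] at h
    simpa [ite_mul, mul_ite, Finset.sum_ite_eq', Finset.mem_Icc, hjn, h1] using h
  -- symmetry at each level
  have hsymKj : ∀ j, 1 ≤ j → j ≤ n + 1 → ∀ a b, Kj j a b = Kj j b a := by
    intro j h1 hjn a b
    have := (main (j - 1) (by omega)).1
    rw [show j - 1 + 1 = j by omega] at this
    exact this a b
  -- telescoping identity
  have tele : ∀ t, t ≤ n → ∀ a b : Ω,
      K a b = (∑ m ∈ Finset.Icc 1 t, N m a * N m b) + Kj (t + 1) a b := by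
    intro t
    induction t with
    | zero => intro _ a b; simp [hK1]
    | succ t ih =>
      intro ht a b
      have hd := hdpos (t + 1) (by omega) ht
      have hne := ne_of_gt hd
      have hrec' := hrec (t + 1) (by omega) hne
      have hsq : Real.sqrt (Kj (t+1) (x (t+1)) (x (t+1)))
          * Real.sqrt (Kj (t+1) (x (t+1)) (x (t+1))) = Kj (t+1) (x (t+1)) (x (t+1)) :=
        Real.mul_self_sqrt hd.le
      have hNN : N (t+1) a * N (t+1) b
          = Kj (t+1) a (x (t+1)) * Kj (t+1) (x (t+1)) b / Kj (t+1) (x (t+1)) (x (t+1)) := by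
        rw [hN (t+1) (by omega) a, hN (t+1) (by omega) b,
          hsymKj (t+1) (by omega) (by omega) (x (t+1)) b,
          div_mul_div_comm, hsq]
      rw [Finset.sum_Icc_succ_top (by omega : 1 ≤ t + 1), ih (by omega) a b,
        hrec' a b, hNN]
      ring
  -- vanishing property
  have vanish : ∀ j, 1 ≤ j → j ≤ n → ∀ m, j < m → m ≤ n + 1 → ∀ b, Kj m (x j) b = 0 := by
    intro j h1 hjn m
    induction m with
    | zero => omega
    | succ m ih =>
      intro hm hmn b
      rcases Nat.lt_or_ge j m with h | h
      · have hd := hdpos m (by omega) (by omega)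
        rw [hrec m (by omega) (ne_of_gt hd) (x j) b, ih h (by omega) b,
          ih h (by omega) (x m)]
        simp
      · have hjm : m = j := by omega
        subst hjm
        have hd := hdpos m h1 hjn
        rw [hrec m h1 (ne_of_gt hd) (x m) b,
          mul_div_cancel_left₀ _ (ne_of_gt hd), sub_self]
  -- part 1 in the asymmetric form
  have part1a : ∀ i j, 1 ≤ i → i ≤ n → i ≤ j → j ≤ n →
      K (x i) (x j) = ∑ m ∈ Finset.Icc 1 i, N m (x i) * N m (x j) := by
    intro i j h1 hin hij hjn
    rw [tele i hin (x i) (x j), vanish i h1 hin (i + 1) (by omega) (by omega) (x j),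
      add_zero]
  have part1 : ∀ i j : ℕ, 1 ≤ i → i ≤ n → 1 ≤ j → j ≤ n →
      K (x i) (x j) = ∑ m ∈ Finset.Icc 1 (min i j), N m (x i) * N m (x j) := by
    intro i j hi1 hin hj1 hjn
    rcases le_total i j with h | h
    · rw [min_eq_left h]; exact part1a i j hi1 hin h hjn
    · rw [min_eq_right h, hsym, part1a j i hj1 hjn h hin]
      exact Finset.sum_congr rfl fun m _ => mul_comm _ _
  refine ⟨part1, ?_⟩
  ext i j
  simp only [Matrix.mul_apply, Matrix.transpose_apply, Matrix.of_apply]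
  rw [part1 ((i : ℕ) + 1) ((j : ℕ) + 1) (by omega) (by omega) (by omega) (by omega)]
  have hmin : min ((i : ℕ) + 1) ((j : ℕ) + 1) = min (i : ℕ) (j : ℕ) + 1 := by omega
  rw [hmin]
  set k := min (i : ℕ) (j : ℕ) with hk
  have hkn : k + 1 ≤ n := by
    have h2 := i.isLt
    have h3 : k ≤ (i : ℕ) := by rw [hk]; exact min_le_left _ _
    omega
  -- LHS : Icc 1 (k+1) sum as range sum
  rw [show Finset.Icc 1 (k + 1) = Finset.Ico 1 (k + 2) by exact (Finset.Ico_add_one_right_eq_Icc (a := 1) (b := k + 1)).symm,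
    Finset.sum_Ico_eq_sum_range]
  -- RHS : Fin sum as range sum
  rw [Fin.sum_univ_eq_sum_range
    (fun m => (if m ≤ (i : ℕ) then N (m + 1) (x ((i : ℕ) + 1)) else 0)
      * (if m ≤ (j : ℕ) then N (m + 1) (x ((j : ℕ) + 1)) else 0)) n]
  rw [← Finset.sum_subset (Finset.range_subset_range.2 hkn)
    (fun m _ hm => by
      have : ¬ (m ≤ (i : ℕ) ∧ m ≤ (j : ℕ)) := by
        simp only [Finset.mem_range, not_lt] at hm; omega
      rcases Nat.lt_or_ge (i : ℕ) m with h | h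
      · rw [if_neg (show ¬ m ≤ (i : ℕ) by omega), zero_mul]
      · rw [if_neg (show ¬ m ≤ (j : ℕ) by omega), mul_zero])]
  refine Finset.sum_congr (by norm_num) fun m hm => ?_
  simp only [Finset.mem_range] at hm
  rw [if_pos (by omega), if_pos (by omega), Nat.add_comm 1 m]
end

section
/- Strict positive definiteness of the kernel on the chosen points guarantees that the recursion is well-defined: for distinct points x_1,…,x_n such that the kernel matrix (K(x_i,x_j))_{i,j=1}^n is positive definite, one has K_j(x_j,x_j) > 0 for all 1 ≤ j ≤ n in the recursion K_{j+1}(x,y) = K_j(x,y) − K_j(x,x_j)K_j(x_j,y)/K_j(x_j,x_j). -/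
/-- Strict positive definiteness of the kernel matrix guarantees that the
Newton/Schur recursion is well-defined: `K_j(x_j,x_j) > 0` for all `1 ≤ j ≤ n`. -/
theorem recursion_well_defined_of_posdef
    {Ω : Type*} (K : Ω → Ω → ℝ) (n : ℕ) (x : ℕ → Ω)
    (hsym : ∀ a b : Ω, K a b = K b a)
    (hdist : ∀ i k : ℕ, 1 ≤ i → i ≤ n → 1 ≤ k → k ≤ n → x i = x k → i = k)
    (hPD : (Matrix.of fun i j : Fin n => K (x ((i : ℕ) + 1)) (x ((j : ℕ) + 1))).PosDef)
    (Kj : ℕ → Ω → Ω → ℝ)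
    (hK1 : ∀ a b : Ω, Kj 1 a b = K a b)
    (hrec : ∀ j : ℕ, 1 ≤ j → Kj j (x j) (x j) ≠ 0 → ∀ a b : Ω,
      Kj (j + 1) a b
        = Kj j a b - Kj j a (x j) * Kj j (x j) b / Kj j (x j) (x j)) :
    ∀ j : ℕ, 1 ≤ j → j ≤ n → 0 < Kj j (x j) (x j) := by
  classical
  set M : Matrix (Fin n) (Fin n) ℝ :=
    Matrix.of fun i j : Fin n => K (x ((i : ℕ) + 1)) (x ((j : ℕ) + 1)) with hMdef
  set B : (Fin n → ℝ) → (Fin n → ℝ) → ℝ := fun u w => dotProduct u (M.mulVec w) with hBdef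
  have hBpos : ∀ u : Fin n → ℝ, u ≠ 0 → 0 < B u u := by
    intro u hu
    have := hPD.dotProduct_mulVec_pos hu
    simpa [hBdef] using this
  have hMsym : M.transpose = M := by
    have := hPD.1
    simpa [Matrix.IsHermitian, Matrix.conjTranspose_eq_transpose_of_trivial] using this
  have hBsym : ∀ u w, B u w = B w u := by
    intro u w
    rw [hBdef]
    simp only
    rw [Matrix.dotProduct_mulVec, dotProduct_comm]
    rw [← Matrix.mulVec_transpose, hMsym]
  have hBsub₁ : ∀ u v w, B (u - v) w = B u w - B v w := by
    intro u v w; simp [hBdef, sub_dotProduct]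
  have hBsub₂ : ∀ u v w, B u (v - w) = B u v - B u w := by
    intro u v w; simp [hBdef, Matrix.mulVec_sub, dotProduct_sub]
  have hBsmul₁ : ∀ (c : ℝ) u w, B (c • u) w = c * B u w := by
    intro c u w; simp [hBdef, smul_dotProduct, smul_eq_mul]
  have hBsmul₂ : ∀ (c : ℝ) u w, B u (c • w) = c * B u w := by
    intro c u w; simp [hBdef, Matrix.mulVec_smul, dotProduct_smul, smul_eq_mul]
  -- main induction
  have main : ∀ j : ℕ, 1 ≤ j → j ≤ n → ∃ u : Fin n → Fin n → ℝ,
      (∀ i k : Fin n, Kj j (x ((i : ℕ) + 1)) (x ((k : ℕ) + 1)) = B (u i) (u k)) ∧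
      (∀ i : Fin n, j ≤ (i : ℕ) + 1 →
        u i i = 1 ∧ ∀ m : Fin n, j ≤ (m : ℕ) + 1 → m ≠ i → u i m = 0) := by
    intro j hj
    induction j, hj using Nat.le_induction with
    | base =>
      intro _
      refine ⟨fun i => Pi.single i 1, ?_, ?_⟩
      · intro i k
        rw [hK1]
        simp [hBdef, Matrix.mulVec_single, dotProduct, Pi.single_apply,
          ite_mul, Finset.sum_ite_eq, hMdef]
      · intro i _
        refine ⟨by simp, fun m _ hm => by simp [Pi.single_apply, hm]⟩
    | succ j hj IH =>
      intro hjn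
      obtain ⟨u, ha, hb⟩ := IH (by omega)
      have hj1 : j - 1 < n := by omega
      set i0 : Fin n := ⟨j - 1, hj1⟩ with hi0
      have hi0v : ((i0 : ℕ) + 1) = j := by simp [hi0]; omega
      have hxeq : x j = x ((i0 : ℕ) + 1) := by rw [hi0v]
      have hui0 : u i0 i0 = 1 ∧ ∀ m : Fin n, j ≤ (m : ℕ) + 1 → m ≠ i0 → u i0 m = 0 :=
        hb i0 (by omega)
      have hu0ne : u i0 ≠ 0 := by
        intro h
        have := congrFun h i0
        rw [hui0.1] at this
        simp at this
      have hdpos : 0 < B (u i0) (u i0) := hBpos _ hu0ne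
      have hxj : Kj j (x j) (x j) = B (u i0) (u i0) := by
        rw [hxeq]; exact ha i0 i0
      have hden : Kj j (x j) (x j) ≠ 0 := by rw [hxj]; exact ne_of_gt hdpos
      set d := B (u i0) (u i0) with hd
      refine ⟨fun i => u i - (B (u i) (u i0) / d) • u i0, ?_, ?_⟩
      · intro i k
        have hr := hrec j (by omega) hden (x ((i : ℕ) + 1)) (x ((k : ℕ) + 1))
        rw [hr, hxj]
        have e1 : Kj j (x ((i : ℕ) + 1)) (x ((k : ℕ) + 1)) = B (u i) (u k) := ha i k
        have e2 : Kj j (x ((i : ℕ) + 1)) (x j) = B (u i) (u i0) := by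
          rw [hxeq]; exact ha i i0
        have e3 : Kj j (x j) (x ((k : ℕ) + 1)) = B (u i0) (u k) := by
          rw [hxeq]; exact ha i0 k
        rw [e1, e2, e3]
        rw [hBsub₂, hBsub₁, hBsub₁, hBsmul₁, hBsmul₂, hBsmul₂, hBsmul₁]
        rw [hBsym (u k) (u i0)]
        field_simp
        try ring
      · intro i hi
        have hii : j ≤ (i : ℕ) := by omega
        have hine : i ≠ i0 := by
          intro h; rw [h] at hii; simp [hi0] at hii; omega
        have hbi := hb i (by omega)
        have hz : u i0 i = 0 := hui0.2 i (by omega) hine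
        constructor
        · simp [hbi.1, hz]
        · intro m hm hmne
          have hmne0 : m ≠ i0 := by
            intro h; rw [h] at hm; simp [hi0] at hm; omega
          have : u i0 m = 0 := hui0.2 m (by omega) hmne0
          simp [this, hbi.2 m (by omega) hmne]
  intro j hj hjn
  obtain ⟨u, ha, hb⟩ := main j hj hjn
  have hj1 : j - 1 < n := by omega
  set i0 : Fin n := ⟨j - 1, hj1⟩ with hi0
  have hi0v : ((i0 : ℕ) + 1) = j := by simp [hi0]; omega
  have hxeq : x j = x ((i0 : ℕ) + 1) := by rw [hi0v]
  have hbi := hb i0 (by omega)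
  have hu0ne : u i0 ≠ 0 := by
    intro h
    have := congrFun h i0
    rw [hbi.1] at this
    simp at this
  have hxj : Kj j (x j) (x j) = B (u i0) (u i0) := by
    rw [hxeq]; exact ha i0 i0
  rw [hxj]
  exact hBpos _ hu0ne
end

section
/- In an RKHS H with kernel K, the squared Power Function P²_{X_n}(z) for the kernel interpolant on x_1,…,x_n equals K(z,z) − Σ_{m=1}^n N_m(z)², where N_m are the Newton basis functions; equivalently, the Power Function recursion P²_{j+1}(z) = P²_j(z) − N_j(z)² holds. -/
open RealInnerProductSpace
open InnerProductSpace

section Aux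
open Finset

private lemma aux_inner_expand {H : Type*} [NormedAddCommGroup H] [InnerProductSpace ℝ H]
    (u : ℕ → H) (hon : Orthonormal ℝ u) (t : ℕ) (a b : H) :
    ⟪a - ∑ m ∈ range t, ⟪a, u m⟫ • u m, b - ∑ m ∈ range t, ⟪b, u m⟫ • u m⟫
      = ⟪a, b⟫ - ∑ m ∈ range t, ⟪a, u m⟫ * ⟪b, u m⟫ := by
  have h4 : ⟪∑ m ∈ range t, ⟪a, u m⟫ • u m, ∑ m ∈ range t, ⟪b, u m⟫ • u m⟫
      = ∑ m ∈ range t, ⟪a, u m⟫ * ⟪b, u m⟫ := by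
    simpa using hon.inner_sum (fun m => ⟪a, u m⟫) (fun m => ⟪b, u m⟫) (range t)
  have h5 : ⟪a, ∑ m ∈ range t, ⟪b, u m⟫ • u m⟫ = ∑ m ∈ range t, ⟪a, u m⟫ * ⟪b, u m⟫ := by
    rw [inner_sum]
    exact Finset.sum_congr rfl fun m _ => by rw [real_inner_smul_right]; ring
  have h6 : ⟪∑ m ∈ range t, ⟪a, u m⟫ • u m, b⟫ = ∑ m ∈ range t, ⟪a, u m⟫ * ⟪b, u m⟫ := by
    rw [sum_inner]
    exact Finset.sum_congr rfl fun m _ => by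
      rw [real_inner_smul_left, real_inner_comm (u m) b]
  rw [inner_sub_left, inner_sub_right, inner_sub_right, h4, h5, h6]
  ring

private lemma aux_power {H : Type*} [NormedAddCommGroup H] [InnerProductSpace ℝ H]
    (f : ℕ → H) (hli : LinearIndependent ℝ f) (z : H) (j : ℕ) :
    (⨅ c : Fin j → ℝ, ‖z - ∑ i, c i • f i‖) ^ 2
      = ‖z‖ ^ 2 - ∑ m ∈ range j, ⟪z, gramSchmidtNormed ℝ f m⟫ ^ 2 := by
  set u := gramSchmidtNormed ℝ f with hu
  set g := gramSchmidt ℝ f with hg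
  have hon : Orthonormal ℝ u := gramSchmidtNormed_orthonormal hli
  have hgne : ∀ n, g n ≠ 0 := fun n => gramSchmidt_ne_zero n hli
  have hgu : ∀ n, g n = ‖g n‖ • u n := by
    intro n
    rw [hu]
    unfold gramSchmidtNormed
    rw [← hg, smul_smul]
    norm_num [mul_inv_cancel₀ (norm_ne_zero_iff.mpr (hgne n))]
  set v := ∑ m ∈ range j, ⟪z, u m⟫ • u m with hv
  have hperp : ∀ m ∈ range j, ⟪z - v, u m⟫ = 0 := by
    intro m hm
    rw [inner_sub_left, hv, sum_inner]
    have : ∀ k ∈ range j, ⟪(⟪z, u k⟫ : ℝ) • u k, u m⟫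
        = if k = m then ⟪z, u m⟫ else 0 := by
      intro k _
      rw [real_inner_smul_left, orthonormal_iff_ite.mp hon k m]
      by_cases h : k = m <;> simp [h]
    rw [Finset.sum_congr rfl this, Finset.sum_ite_eq' (range j) m]
    simp [hm]
  have hperpg : ∀ m ∈ range j, ⟪z - v, g m⟫ = 0 := by
    intro m hm
    rw [hgu m, real_inner_smul_right, hperp m hm, mul_zero]
  have hperpf : ∀ i : ℕ, i < j → ⟪z - v, f i⟫ = 0 := by
    intro i hij
    have hd := gramSchmidt_def'' ℝ f i
    rw [hd, inner_add_right, inner_sum, hperpg i (mem_range.mpr hij)]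
    rw [Finset.sum_eq_zero, add_zero]
    intro k hk
    rw [real_inner_smul_right, hperpg k (mem_range.mpr (lt_trans (mem_Iio.mp hk) hij)),
      mul_zero]
  have hvmem : v ∈ Submodule.span ℝ (Set.range fun i : Fin j => f i) := by
    apply Submodule.sum_mem
    intro m hm
    apply Submodule.smul_mem
    have hum : u m = (‖g m‖)⁻¹ • g m := by rw [hu]; rfl
    rw [hum]
    apply Submodule.smul_mem
    have hgm : g m ∈ Submodule.span ℝ (f '' Set.Iic m) := gramSchmidt_mem_span ℝ f le_rfl
    refine Submodule.span_mono ?_ hgm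
    rintro - ⟨k, hk, rfl⟩
    exact ⟨⟨k, lt_of_le_of_lt hk (mem_range.mp hm)⟩, rfl⟩
  obtain ⟨c, hc⟩ := (Submodule.mem_span_range_iff_exists_fun (R := ℝ)).mp hvmem
  have hlowsq : ∀ c' : Fin j → ℝ, ‖z - v‖ ^ 2 ≤ ‖z - ∑ i, c' i • f i‖ ^ 2 := by
    intro c'
    have hkey : ⟪z - v, v - ∑ i, c' i • f i⟫ = 0 := by
      rw [inner_sub_right]
      have h1 : ⟪z - v, v⟫ = 0 := by
        rw [hv, inner_sum]
        exact Finset.sum_eq_zero fun m hm => by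
          rw [real_inner_smul_right, hperp m hm, mul_zero]
      have h2 : ⟪z - v, ∑ i, c' i • f i⟫ = 0 := by
        rw [inner_sum]
        exact Finset.sum_eq_zero fun i _ => by
          rw [real_inner_smul_right, hperpf i i.2, mul_zero]
      rw [h1, h2, sub_zero]
    have hsplit : z - ∑ i, c' i • f i = (z - v) + (v - ∑ i, c' i • f i) := by abel
    rw [hsplit, norm_add_sq_real, hkey]
    nlinarith [sq_nonneg ‖v - ∑ i, c' i • f i‖]
  have hlow : ∀ c' : Fin j → ℝ, ‖z - v‖ ≤ ‖z - ∑ i, c' i • f i‖ := fun c' =>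
    (pow_le_pow_iff_left₀ (norm_nonneg _) (norm_nonneg _) two_ne_zero).mp (hlowsq c')
  have hinf : (⨅ c' : Fin j → ℝ, ‖z - ∑ i, c' i • f i‖) = ‖z - v‖ := by
    refine le_antisymm ?_ (le_ciInf hlow)
    have hb : BddBelow (Set.range fun c' : Fin j → ℝ => ‖z - ∑ i, c' i • f i‖) :=
      ⟨0, by rintro y ⟨c', rfl⟩; exact norm_nonneg _⟩
    have := ciInf_le hb c
    rwa [hc] at this
  rw [hinf, ← real_inner_self_eq_norm_sq]
  have := aux_inner_expand u hon j z z
  rw [hv, this, real_inner_self_eq_norm_sq]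
  congr 1
  exact Finset.sum_congr rfl fun m _ => (sq ⟪z, u m⟫).symm ▸ rfl

private lemma aux_Icc_sum (h : ℕ → ℝ) (j : ℕ) :
    ∑ m ∈ Finset.Icc 1 j, h m = ∑ t ∈ range j, h (t + 1) := by
  induction j with
  | zero => simp
  | succ n ih =>
    rw [Finset.sum_Icc_succ_top (Nat.succ_le_succ (Nat.zero_le n)), ih,
      Finset.sum_range_succ]

end Aux

/-- The squared Power Function of interpolation on `x_1,…,x_j` equals
`K(z,z) − Σ_{m=1}^j N_m(z)²`; equivalently the recursion
`P_{j+1}²(z) = P_j²(z) − N_{j+1}(z)²` holds. -/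
theorem power_function_newton_representation
    {H : Type*} [NormedAddCommGroup H] [InnerProductSpace ℝ H] [CompleteSpace H]
    {Ω : Type*} (K : Ω → Ω → ℝ) (Φ : Ω → H)
    (hker : ∀ a b : Ω, K a b = ⟪Φ a, Φ b⟫)
    (hSPD : ∀ (m : ℕ) (y : Fin m → Ω), Function.Injective y →
      (Matrix.of fun i j : Fin m => K (y i) (y j)).PosDef)
    (x : ℕ → Ω) (hdist : Function.Injective x)
    (Kj : ℕ → Ω → Ω → ℝ) (N : ℕ → Ω → ℝ)
    (hK1 : ∀ a b : Ω, Kj 1 a b = K a b)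
    (hrec : ∀ j : ℕ, 1 ≤ j → Kj j (x j) (x j) ≠ 0 → ∀ a b : Ω,
      Kj (j + 1) a b
        = Kj j a b - Kj j a (x j) * Kj j (x j) b / Kj j (x j) (x j))
    (hN : ∀ j : ℕ, 1 ≤ j → ∀ a : Ω,
      N j a = Kj j a (x j) / Real.sqrt (Kj j (x j) (x j)))
    (P : ℕ → Ω → ℝ)
    (hP : ∀ (j : ℕ) (z : Ω),
      P j z = ⨅ u : Fin j → ℝ,
        ‖InnerProductSpace.toDual ℝ H (Φ z)
          - ∑ i, u i • InnerProductSpace.toDual ℝ H (Φ (x ((i : ℕ) + 1)))‖) :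
    (∀ (j : ℕ) (z : Ω),
      P j z ^ 2 = K z z - ∑ m ∈ Finset.Icc 1 j, N m z ^ 2) ∧
    (∀ (j : ℕ) (z : Ω),
      P (j + 1) z ^ 2 = P j z ^ 2 - N (j + 1) z ^ 2) := by
  classical
  open Finset Matrix in
  set f : ℕ → H := fun n => Φ (x (n + 1)) with hf
  -- linear independence of the kernel translates
  have hli : LinearIndependent ℝ f := by
    rw [linearIndependent_iff']
    intro s gc hsum i hi
    set n := s.sup id + 1 with hn
    have hsn : ∀ k ∈ s, k < n := fun k hk => Nat.lt_succ_of_le (Finset.le_sup (f := id) hk)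
    set y : Fin n → Ω := fun i => x ((i : ℕ) + 1) with hy
    have hyinj : Function.Injective y := by
      intro a b hab
      exact Fin.ext (Nat.succ_injective (hdist hab))
    have hpd := hSPD n y hyinj
    set cc : Fin n → ℝ := fun k => if (k : ℕ) ∈ s then gc k else 0 with hcc
    have hzero : ∑ k : Fin n, cc k • f (k : ℕ) = 0 := by
      have e1 : ∑ k : Fin n, cc k • f (k : ℕ)
          = ∑ k ∈ range n, (if k ∈ s then gc k else 0) • f k :=
        Fin.sum_univ_eq_sum_range (fun k => (if k ∈ s then gc k else 0) • f k) n
      have e2 : ∑ k ∈ range n, (if k ∈ s then gc k else 0) • f k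
          = ∑ k ∈ range n, (if k ∈ s then gc k • f k else 0) := by
        refine Finset.sum_congr rfl fun k _ => ?_
        split <;> simp
      rw [e1, e2, Finset.sum_ite_mem, Finset.inter_eq_right.mpr
        (fun k hk => mem_range.mpr (hsn k hk))]
      exact hsum
    have hq : dotProduct (star cc) ((Matrix.of fun i j : Fin n => K (y i) (y j)) *ᵥ cc) = 0 := by
      have hexp : dotProduct (star cc) ((Matrix.of fun i j : Fin n => K (y i) (y j)) *ᵥ cc)
          = ⟪∑ k : Fin n, cc k • f (k : ℕ), ∑ k : Fin n, cc k • f (k : ℕ)⟫ := by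
        rw [sum_inner]
        simp only [dotProduct, Matrix.mulVec, Matrix.of_apply, star_trivial, Pi.star_apply]
        refine Finset.sum_congr rfl fun k _ => ?_
        rw [real_inner_smul_left, inner_sum, Finset.mul_sum, Finset.mul_sum]
        refine Finset.sum_congr rfl fun l _ => ?_
        rw [real_inner_smul_right, hker]
        simp only [hy, hf]
        ring
      rw [hexp, hzero, inner_zero_left]
    have hcz : cc = 0 := by
      by_contra hne
      exact absurd hq (ne_of_gt (hpd.dotProduct_mulVec_pos hne))
    have h0 : cc ⟨i, hsn i hi⟩ = 0 := by rw [hcz]; rfl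
    simpa [hcc, hi] using h0
  set u := gramSchmidtNormed ℝ f with huu
  set g := gramSchmidt ℝ f with hgg
  have hon : Orthonormal ℝ u := gramSchmidtNormed_orthonormal hli
  have hgne : ∀ n, g n ≠ 0 := fun n => gramSchmidt_ne_zero n hli
  have hgnorm : ∀ n, ‖g n‖ ≠ 0 := fun n => norm_ne_zero_iff.mpr (hgne n)
  have hgu : ∀ n, g n = ‖g n‖ • u n := by
    intro n
    rw [huu]
    unfold gramSchmidtNormed
    rw [← hgg, smul_smul]
    norm_num [mul_inv_cancel₀ (hgnorm n)]
  have hug : ∀ (w : H) (n : ℕ), ⟪w, u n⟫ = ⟪w, g n⟫ / ‖g n‖ := by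
    intro w n
    have hun : u n = (‖g n‖)⁻¹ • g n := by rw [huu]; rfl
    rw [hun, real_inner_smul_right]
    ring
  -- the residual of Gram-Schmidt
  have hEf : ∀ t : ℕ, f t - ∑ m ∈ range t, ⟪f t, u m⟫ • u m = g t := by
    intro t
    have hd := gramSchmidt_def'' ℝ f t
    rw [← hgg, show Finset.Iio t = range t from Nat.Iio_eq_range (a := t)] at hd
    have hsums : ∑ m ∈ range t, ⟪f t, u m⟫ • u m
        = ∑ m ∈ range t, ((⟪g m, f t⟫ : ℝ) / (‖g m‖ : ℝ) ^ 2) • g m := by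
      refine Finset.sum_congr rfl fun m _ => ?_
      have hun : u m = (‖g m‖)⁻¹ • g m := by rw [huu]; rfl
      rw [hun, real_inner_smul_right, smul_smul, real_inner_comm (g m) (f t)]
      congr 1
      ring
    rw [hsums]
    nth_rewrite 1 [hd]
    exact add_sub_cancel_right _ _
  have horthg : ∀ (t : ℕ) (w : H),
      ⟪w - ∑ m ∈ range t, ⟪w, u m⟫ • u m, g t⟫ = ⟪w, g t⟫ := by
    intro t w
    rw [inner_sub_left, sum_inner, Finset.sum_eq_zero, sub_zero]
    intro m hm
    rw [real_inner_smul_left, hgu t, real_inner_smul_right,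
      orthonormal_iff_ite.mp hon m t, if_neg (Nat.ne_of_lt (mem_range.mp hm))]
    ring
  -- consequences of the scalar form of `Kj`
  have hKform : ∀ t : ℕ,
      (∀ a b : Ω, Kj (t + 1) a b
        = ⟪Φ a, Φ b⟫ - ∑ m ∈ range t, ⟪Φ a, u m⟫ * ⟪Φ b, u m⟫) →
      (∀ a : Ω, Kj (t + 1) a (x (t + 1)) = ⟪Φ a, g t⟫) ∧
      (∀ b : Ω, Kj (t + 1) (x (t + 1)) b = ⟪Φ b, g t⟫) ∧
      Kj (t + 1) (x (t + 1)) (x (t + 1)) = ‖g t‖ ^ 2 := by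
    intro t hsc
    have hE : ∀ a b : Ω, Kj (t + 1) a b
        = ⟪Φ a - ∑ m ∈ range t, ⟪Φ a, u m⟫ • u m,
            Φ b - ∑ m ∈ range t, ⟪Φ b, u m⟫ • u m⟫ :=
      fun a b => (hsc a b).trans (aux_inner_expand u hon t (Φ a) (Φ b)).symm
    have hfx : Φ (x (t + 1)) = f t := rfl
    have h1 : ∀ a : Ω, Kj (t + 1) a (x (t + 1)) = ⟪Φ a, g t⟫ := by
      intro a
      rw [hE a (x (t + 1)), hfx, hEf t, horthg t (Φ a)]
    have h2 : ∀ b : Ω, Kj (t + 1) (x (t + 1)) b = ⟪Φ b, g t⟫ := by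
      intro b
      rw [hE (x (t + 1)) b, hfx, hEf t, real_inner_comm, horthg t (Φ b)]
    refine ⟨h1, h2, ?_⟩
    rw [h1 (x (t + 1)), hfx, ← horthg t (f t), hEf t, real_inner_self_eq_norm_sq]
  -- main induction: scalar form of `Kj`
  have hKj : ∀ (t : ℕ) (a b : Ω), Kj (t + 1) a b
      = ⟪Φ a, Φ b⟫ - ∑ m ∈ range t, ⟪Φ a, u m⟫ * ⟪Φ b, u m⟫ := by
    intro t
    induction t with
    | zero => intro a b; simp [hK1, hker]
    | succ t ih =>
      obtain ⟨h1, h2, h3⟩ := hKform t ih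
      have hne : Kj (t + 1) (x (t + 1)) (x (t + 1)) ≠ 0 := by
        rw [h3]; exact pow_ne_zero 2 (hgnorm t)
      intro a b
      rw [hrec (t + 1) (Nat.le_add_left 1 t) hne a b, h3, h1 a, h2 b, ih a b,
        Finset.sum_range_succ]
      have hterm : ⟪Φ a, u t⟫ * ⟪Φ b, u t⟫ = ⟪Φ a, g t⟫ * ⟪Φ b, g t⟫ / ‖g t‖ ^ 2 := by
        rw [hug (Φ a) t, hug (Φ b) t]
        ring
      rw [hterm]
      ring
  -- Newton basis functions are the orthonormal coordinates
  have hNu : ∀ (t : ℕ) (z : Ω), N (t + 1) z = ⟪Φ z, u t⟫ := by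
    intro t z
    obtain ⟨h1, _, h3⟩ := hKform t (hKj t)
    rw [hN (t + 1) (Nat.le_add_left 1 t) z, h1 z, h3,
      Real.sqrt_sq (norm_nonneg _), hug (Φ z) t]
  -- power function in terms of vectors
  have hPf : ∀ (j : ℕ) (z : Ω),
      P j z = ⨅ c : Fin j → ℝ, ‖Φ z - ∑ i, c i • f (i : ℕ)‖ := by
    intro j z
    rw [hP j z]
    congr 1
    funext c
    have hmap : ∑ i : Fin j, c i • (InnerProductSpace.toDual ℝ H) (Φ (x ((i : ℕ) + 1)))
        = (InnerProductSpace.toDual ℝ H) (∑ i : Fin j, c i • f (i : ℕ)) := by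
      rw [map_sum]
      refine Finset.sum_congr rfl fun i _ => ?_
      rw [show Φ (x ((i : ℕ) + 1)) = f (i : ℕ) from rfl]
      simp
    rw [hmap, ← map_sub]
    exact (InnerProductSpace.toDual ℝ H).norm_map _
  have hfirst : ∀ (j : ℕ) (z : Ω),
      P j z ^ 2 = K z z - ∑ m ∈ Finset.Icc 1 j, N m z ^ 2 := by
    intro j z
    rw [hPf j z, aux_power f hli (Φ z) j, hker z z, real_inner_self_eq_norm_sq,
      aux_Icc_sum (fun m => N m z ^ 2) j]
    congr 1
    exact Finset.sum_congr rfl fun t _ => by rw [hNu t z]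
  refine ⟨hfirst, fun j z => ?_⟩
  rw [hfirst (j + 1) z, hfirst j z, aux_Icc_sum (fun m => N m z ^ 2) (j + 1),
    aux_Icc_sum (fun m => N m z ^ 2) j, Finset.sum_range_succ]
  ring
end

section
/- Greedy optimality of one step: given already chosen points x_1,…,x_{j−1}, the squared Power Function after adding a candidate point x is P²(z) = K(z,z) − Σ_{k=1}^{j−1} N_k(z)² − K_j(z,x)²/K_j(x,x), so choosing x to maximize K_j(z,x)²/K_j(x,x) among candidates minimizes the resulting Power Function at z. -/
open RealInnerProductSpace
open InnerProductSpace

lemma aux_li {H : Type*} [NormedAddCommGroup H] [InnerProductSpace ℝ H]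
    (f : ℕ → H)
    (h : ∀ m : ℕ, (Matrix.of fun i k : Fin m => ⟪f i, f k⟫).PosDef) :
    LinearIndependent ℝ f := by
  rw [linearIndependent_iff']
  intro s c hsum i hi
  by_contra hne
  set m : ℕ := s.sup id + 1 with hm
  have him : ∀ a ∈ s, a < m := fun a ha => Nat.lt_succ_of_le (Finset.le_sup (f := id) ha)
  set c' : Fin m → ℝ := fun k => if (k : ℕ) ∈ s then c k else 0 with hc'
  have hc'i : c' ⟨i, him i hi⟩ ≠ 0 := by simpa [hc', hi] using hne
  have hc'ne : c' ≠ 0 := fun h0 => hc'i (by rw [h0]; rfl)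
  have hq := (h m).dotProduct_mulVec_pos hc'ne
  have hw : (∑ k : Fin m, c' k • f k) = 0 := by
    rw [← hsum]
    rw [Fin.sum_univ_eq_sum_range (fun k => (if k ∈ s then c k else 0) • f k) m]
    rw [← Finset.sum_filter_add_sum_filter_not (Finset.range m) (· ∈ s)]
    have h1 : (Finset.range m).filter (· ∈ s) = s := by
      ext a; simp only [Finset.mem_filter, Finset.mem_range]
      exact ⟨fun h => h.2, fun h => ⟨him a h, h⟩⟩
    rw [h1]
    have h2 : ∀ a ∈ (Finset.range m).filter (¬ · ∈ s),
        (if a ∈ s then c a else 0) • f a = 0 := by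
      intro a ha
      simp only [Finset.mem_filter] at ha
      simp [ha.2]
    rw [Finset.sum_eq_zero h2, add_zero]
    refine Finset.sum_congr rfl fun a ha => ?_
    simp [ha]
  have hform : dotProduct (star c') ((Matrix.of fun i k : Fin m => ⟪f i, f k⟫).mulVec c')
      = ⟪∑ k : Fin m, c' k • f k, ∑ k : Fin m, c' k • f k⟫ := by
    simp only [dotProduct, Matrix.mulVec, Matrix.of_apply, star_trivial,
      Pi.star_apply, sum_inner, inner_sum, real_inner_smul_left, real_inner_smul_right,
      Finset.mul_sum, dotProduct]
    refine Finset.sum_congr rfl fun a _ => Finset.sum_congr rfl fun b _ => ?_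
    rw [real_inner_comm (f (a:ℕ)) (f (b:ℕ))]; ring
  rw [hform, hw] at hq
  simp at hq

set_option maxHeartbeats 2000000 in
/-- Greedy optimality of one step: with points `x_1,…,x_j` already chosen,
adding a candidate `y` gives the squared Power Function
`P²(z) = K(z,z) − Σ_{k=1}^j N_k(z)² − K_{j+1}(z,y)²/K_{j+1}(y,y)`;
hence maximizing `K_{j+1}(z,y)²/K_{j+1}(y,y)` among candidates minimizes the
resulting Power Function at `z`. -/
theorem greedy_step_optimality
    {H : Type*} [NormedAddCommGroup H] [InnerProductSpace ℝ H] [CompleteSpace H]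
    {Ω : Type*} (K : Ω → Ω → ℝ) (Φ : Ω → H)
    (hker : ∀ a b : Ω, K a b = ⟪Φ a, Φ b⟫)
    (hSPD : ∀ (m : ℕ) (y : Fin m → Ω), Function.Injective y →
      (Matrix.of fun i k : Fin m => K (y i) (y k)).PosDef)
    (x : ℕ → Ω) (hdist : Function.Injective x)
    (Kj : ℕ → Ω → Ω → ℝ) (N : ℕ → Ω → ℝ)
    (hK1 : ∀ a b : Ω, Kj 1 a b = K a b)
    (hrec : ∀ m : ℕ, 1 ≤ m → Kj m (x m) (x m) ≠ 0 → ∀ a b : Ω,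
      Kj (m + 1) a b
        = Kj m a b - Kj m a (x m) * Kj m (x m) b / Kj m (x m) (x m))
    (hN : ∀ m : ℕ, 1 ≤ m → ∀ a : Ω,
      N m a = Kj m a (x m) / Real.sqrt (Kj m (x m) (x m)))
    (j : ℕ) (z : Ω)
    (P : Ω → ℝ)
    (hP : ∀ y : Ω,
      P y = ⨅ p : (Fin j → ℝ) × ℝ,
        ‖InnerProductSpace.toDual ℝ H (Φ z)
          - ∑ i, p.1 i • InnerProductSpace.toDual ℝ H (Φ (x ((i : ℕ) + 1)))
          - p.2 • InnerProductSpace.toDual ℝ H (Φ y)‖) :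
    (∀ y : Ω, 0 < Kj (j + 1) y y →
      P y ^ 2 = K z z - (∑ k ∈ Finset.Icc 1 j, N k z ^ 2)
        - Kj (j + 1) z y ^ 2 / Kj (j + 1) y y) ∧
    (∀ y y' : Ω, 0 < Kj (j + 1) y y → 0 < Kj (j + 1) y' y' →
      Kj (j + 1) z y' ^ 2 / Kj (j + 1) y' y'
        ≤ Kj (j + 1) z y ^ 2 / Kj (j + 1) y y →
      P y ≤ P y') := by
  classical
  set f : ℕ → H := fun k => Φ (x (k + 1)) with hf
  -- linear independence
  have hfli : LinearIndependent ℝ f := by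
    apply aux_li
    intro m
    have hinj : Function.Injective (fun i : Fin m => x ((i : ℕ) + 1)) := by
      intro a b hab
      exact Fin.ext (Nat.succ_injective (hdist hab))
    have := hSPD m (fun i : Fin m => x ((i : ℕ) + 1)) hinj
    have hmat : (Matrix.of fun i k : Fin m => ⟪f (i : ℕ), f (k : ℕ)⟫)
        = (Matrix.of fun i k : Fin m => K (x ((i : ℕ) + 1)) (x ((k : ℕ) + 1))) := by
      funext i k
      simp [hf, hker]
    rw [hmat]
    exact this
  set g : ℕ → H := gramSchmidt ℝ f with hg
  set gn : ℕ → H := gramSchmidtNormed ℝ f with hgn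
  have hon : Orthonormal ℝ gn := gramSchmidtNormed_orthonormal hfli
  have hgne : ∀ n, g n ≠ 0 := fun n => gramSchmidt_ne_zero n hfli
  have hgnorm : ∀ n, (0:ℝ) < ‖g n‖ := fun n => norm_pos_iff.2 (hgne n)
  have hgn_def : ∀ n, gn n = (‖g n‖)⁻¹ • g n := by
    intro n; simp [hgn, gramSchmidtNormed, hg]
  have honite : ∀ k l, ⟪gn k, gn l⟫ = if k = l then (1:ℝ) else 0 :=
    fun k l => orthonormal_iff_ite.mp hon k l
  -- g in terms of gn
  have hgdef : ∀ n, g n = f n - ∑ k ∈ Finset.Iio n, ⟪gn k, f n⟫ • gn k := by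
    intro n
    have hd := gramSchmidt_def'' ℝ f n
    simp only [RCLike.ofReal_real_eq_id, id] at hd
    have hco : ∀ k ∈ Finset.Iio n, (⟪g k, f n⟫ / ‖g k‖ ^ 2) • g k = ⟪gn k, f n⟫ • gn k := by
      intro k _
      rw [hgn_def k, real_inner_smul_left, smul_smul]
      congr 1
      rw [div_eq_mul_inv, pow_two, mul_inv]
      ring
    rw [eq_sub_iff_add_eq, ← Finset.sum_congr rfl hco]
    exact hd.symm
  have hinner_g : ∀ (n : ℕ) (v : H),
      ⟪v, g n⟫ = ⟪v, f n⟫ - ∑ k ∈ Finset.range n, ⟪v, gn k⟫ * ⟪gn k, f n⟫ := by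
    intro n v
    rw [hgdef n, ← Nat.Iio_eq_range]
    simp [inner_sub_right, inner_sum, real_inner_smul_right, mul_comm]
  set S : ℕ → Ω → Ω → ℝ := fun m a b =>
    ⟪Φ a, Φ b⟫ - ∑ k ∈ Finset.range m, ⟪Φ a, gn k⟫ * ⟪Φ b, gn k⟫ with hS
  have hSsymm : ∀ m a b, S m a b = S m b a := by
    intro m a b
    simp only [hS, real_inner_comm (Φ a) (Φ b)]
    congr 1
    exact Finset.sum_congr rfl fun k _ => by ring
  have hSz : ∀ (m : ℕ) (a : Ω), S m a (x (m+1)) = ⟪Φ a, g m⟫ := by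
    intro m a
    rw [hinner_g m (Φ a)]
    simp only [hS]
    congr 1
    exact Finset.sum_congr rfl fun k _ => by rw [real_inner_comm (gn k) (f m)]
  -- ⟪f m, g m⟫ = ‖g m‖^2
  have horthgn : ∀ k n, k ≠ n → ⟪gn k, g n⟫ = 0 := by
    intro k n hkn
    rw [hgn_def k, real_inner_smul_left]
    rw [hg]
    rw [gramSchmidt_orthogonal ℝ f hkn]
    ring
  have hfg : ∀ m, ⟪f m, g m⟫ = ‖g m‖^2 := by
    intro m
    have h1 : f m = g m + ∑ k ∈ Finset.Iio m, ⟪gn k, f m⟫ • gn k := by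
      rw [hgdef m]; abel
    rw [h1, inner_add_left, sum_inner, real_inner_self_eq_norm_sq]
    have : ∀ k ∈ Finset.Iio m, ⟪⟪gn k, f m⟫ • gn k, g m⟫ = 0 := by
      intro k hk
      rw [real_inner_smul_left, horthgn k m (Finset.mem_Iio.mp hk).ne]
      ring
    rw [Finset.sum_congr rfl this]
    simp
  have hSdiag : ∀ m, S m (x (m+1)) (x (m+1)) = ‖g m‖^2 := by
    intro m
    rw [hSz m (x (m+1))]
    exact hfg m
  have hgpos : ∀ m, (0:ℝ) < ‖g m‖^2 := fun m => pow_pos (hgnorm m) 2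
  -- main induction
  have hKjS : ∀ m, ∀ a b : Ω, Kj (m+1) a b = S m a b := by
    intro m
    induction m with
    | zero =>
      intro a b
      rw [hK1, hker]
      simp [hS]
    | succ m ih =>
      intro a b
      have hne : Kj (m+1) (x (m+1)) (x (m+1)) ≠ 0 := by
        rw [ih, hSdiag]; exact (hgpos m).ne'
      rw [hrec (m+1) (Nat.le_add_left 1 m) hne a b, ih, ih, ih, ih]
      rw [hSz m a, hSsymm m (x (m+1)) b, hSz m b, hSdiag m]
      simp only [hS, Finset.sum_range_succ]
      have hgna : ⟪Φ a, gn m⟫ = ‖g m‖⁻¹ * ⟪Φ a, g m⟫ := by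
        rw [hgn_def m, real_inner_smul_right]
      have hgnb : ⟪Φ b, gn m⟫ = ‖g m‖⁻¹ * ⟪Φ b, g m⟫ := by
        rw [hgn_def m, real_inner_smul_right]
      rw [hgna, hgnb]
      have := (hgnorm m).ne'
      field_simp
      ring
  -- Newton basis functions
  have hNz : ∀ k : ℕ, N (k+1) z = ⟪Φ z, gn k⟫ := by
    intro k
    rw [hN (k+1) (Nat.le_add_left 1 k) z, hKjS k, hKjS k, hSz k z, hSdiag k,
      Real.sqrt_sq (norm_nonneg _), hgn_def k, real_inner_smul_right]
    rw [div_eq_inv_mul]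
  have hsumN : ∀ n : ℕ, ∑ k ∈ Finset.Icc 1 n, N k z ^ 2 = ∑ k ∈ Finset.range n, ⟪Φ z, gn k⟫ ^ 2 := by
    intro n
    induction n with
    | zero => simp
    | succ n ih =>
      rw [Finset.sum_Icc_succ_top (Nat.le_add_left 1 n), ih, Finset.sum_range_succ, hNz n]
  -- the key formula
  have key : ∀ y : Ω, 0 < Kj (j + 1) y y →
      P y ^ 2 = K z z - (∑ k ∈ Finset.Icc 1 j, N k z ^ 2)
        - Kj (j + 1) z y ^ 2 / Kj (j + 1) y y := by
    intro y hy
    have hySy : 0 < S j y y := by rw [← hKjS j y y]; exact hy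
    set u : H := Φ y - ∑ k ∈ Finset.range j, ⟪Φ y, gn k⟫ • gn k with hu
    have hinner_u : ∀ v : H,
        ⟪v, u⟫ = ⟪v, Φ y⟫ - ∑ k ∈ Finset.range j, ⟪Φ y, gn k⟫ * ⟪v, gn k⟫ := by
      intro v
      simp [hu, inner_sub_right, inner_sum, real_inner_smul_right]
    have hzu : ⟪Φ z, u⟫ = S j z y := by
      rw [hinner_u (Φ z)]
      simp only [hS]
      congr 1
      exact Finset.sum_congr rfl fun k _ => by ring
    have hyu : ⟪Φ y, u⟫ = S j y y := by
      rw [hinner_u (Φ y)]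
    have hgnu : ∀ k ∈ Finset.range j, ⟪gn k, u⟫ = 0 := by
      intro k hk
      rw [hinner_u (gn k)]
      have hterm : ∀ l ∈ Finset.range j,
          ⟪Φ y, gn l⟫ * ⟪gn k, gn l⟫ = if k = l then ⟪Φ y, gn l⟫ else 0 := by
        intro l _
        rw [honite k l]
        split <;> simp
      rw [Finset.sum_congr rfl hterm, Finset.sum_ite_eq, if_pos hk,
        real_inner_comm (gn k) (Φ y)]
      ring
    have huu : ‖u‖ ^ 2 = S j y y := by
      rw [← real_inner_self_eq_norm_sq]
      have h1 : ⟪u, u⟫ = ⟪Φ y, u⟫ - ∑ k ∈ Finset.range j, ⟪Φ y, gn k⟫ * ⟪gn k, u⟫ := by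
        conv_lhs => rw [hu]
        rw [inner_sub_left, sum_inner]
        simp [real_inner_smul_left]
        rw [← hu]
      rw [h1, hyu, Finset.sum_congr rfl (fun k hk => by rw [hgnu k hk, mul_zero])]
      simp
    have hupos : (0:ℝ) < ‖u‖ := by
      have h2 : (0:ℝ) < ‖u‖ ^ 2 := by rw [huu]; exact hySy
      nlinarith [norm_nonneg u]
    set w : H := ‖u‖⁻¹ • u with hw
    have hww : ⟪w, w⟫ = 1 := by
      rw [hw, real_inner_smul_left, real_inner_smul_right, real_inner_self_eq_norm_sq]
      field_simp
    have hgnw : ∀ k ∈ Finset.range j, ⟪gn k, w⟫ = 0 := by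
      intro k hk
      rw [hw, real_inner_smul_right, hgnu k hk, mul_zero]
    have hzw : ⟪Φ z, w⟫ = ‖u‖⁻¹ * S j z y := by
      rw [hw, real_inner_smul_right, hzu]
    set v₀ : H := (∑ k ∈ Finset.range j, ⟪Φ z, gn k⟫ • gn k) + ⟪Φ z, w⟫ • w with hv0
    set r : H := Φ z - v₀ with hrdef
    have hinner_r : ∀ v : H, ⟪v, r⟫ = ⟪v, Φ z⟫
        - ∑ k ∈ Finset.range j, ⟪Φ z, gn k⟫ * ⟪v, gn k⟫ - ⟪Φ z, w⟫ * ⟪v, w⟫ := by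
      intro v
      rw [hrdef, hv0]
      simp [inner_sub_right, inner_add_right, inner_sum, real_inner_smul_right, sub_sub]
    have hr_gn : ∀ k ∈ Finset.range j, ⟪gn k, r⟫ = 0 := by
      intro k hk
      rw [hinner_r (gn k)]
      have hterm : ∀ l ∈ Finset.range j,
          ⟪Φ z, gn l⟫ * ⟪gn k, gn l⟫ = if k = l then ⟪Φ z, gn l⟫ else 0 := by
        intro l _
        rw [honite k l]
        split <;> simp
      rw [Finset.sum_congr rfl hterm, Finset.sum_ite_eq, if_pos hk, hgnw k hk,
        real_inner_comm (gn k) (Φ z)]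
      ring
    have hr_w : ⟪w, r⟫ = 0 := by
      rw [hinner_r w, hww]
      have hterm : ∀ l ∈ Finset.range j, ⟪Φ z, gn l⟫ * ⟪w, gn l⟫ = 0 := by
        intro l hl
        exact mul_eq_zero_of_right _ (by rw [real_inner_comm]; exact hgnw l hl)
      rw [Finset.sum_congr rfl hterm, real_inner_comm w (Φ z)]
      simp
    have hg_smul : ∀ k : ℕ, g k = ‖g k‖ • gn k := by
      intro k
      rw [hgn_def k, smul_smul, mul_inv_cancel₀ (hgnorm k).ne', one_smul]
    have hr_g : ∀ k ∈ Finset.range j, ⟪g k, r⟫ = 0 := by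
      intro k hk
      rw [hg_smul k, real_inner_smul_left, hr_gn k hk, mul_zero]
    have hr_f : ∀ i : Fin j, ⟪f (i:ℕ), r⟫ = 0 := by
      intro i
      have hd := gramSchmidt_def'' ℝ f (i:ℕ)
      simp only [RCLike.ofReal_real_eq_id, id] at hd
      rw [hd, inner_add_left, sum_inner,
        hr_g (i:ℕ) (Finset.mem_range.mpr i.isLt)]
      have hterm : ∀ k ∈ Finset.Iio (i:ℕ),
          ⟪(⟪gramSchmidt ℝ f k, f (i:ℕ)⟫ / ‖gramSchmidt ℝ f k‖ ^ 2) • gramSchmidt ℝ f k, r⟫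
            = 0 := by
        intro k hk
        rw [real_inner_smul_left,
          hr_g k (Finset.mem_range.mpr ((Finset.mem_Iio.mp hk).trans i.isLt)), mul_zero]
      rw [Finset.sum_congr rfl hterm]
      simp
    have hu_smul : u = ‖u‖ • w := by
      rw [hw, smul_smul, mul_inv_cancel₀ hupos.ne', one_smul]
    have hr_y : ⟪Φ y, r⟫ = 0 := by
      have hy' : Φ y = u + ∑ k ∈ Finset.range j, ⟪Φ y, gn k⟫ • gn k := by
        rw [hu]; abel
      have hur : ⟪u, r⟫ = 0 := by
        rw [hu_smul, real_inner_smul_left, hr_w, mul_zero]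
      rw [hy', inner_add_left, hur, sum_inner]
      have hterm : ∀ k ∈ Finset.range j, ⟪⟪Φ y, gn k⟫ • gn k, r⟫ = 0 := by
        intro k hk
        rw [real_inner_smul_left, hr_gn k hk, mul_zero]
      rw [Finset.sum_congr rfl hterm]
      simp
    -- the span
    set T : Set H := (Set.range fun i : Fin j => f (i:ℕ)) ∪ {Φ y} with hT
    set V : Submodule ℝ H := Submodule.span ℝ T with hV
    have hr_V : ∀ v ∈ V, ⟪v, r⟫ = 0 := by
      intro v hv
      induction hv using Submodule.span_induction with
      | mem v hvT =>
        rcases hvT with ⟨i, rfl⟩ | rfl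
        · exact hr_f i
        · exact hr_y
      | zero => exact inner_zero_left r
      | add v v' _ _ h1 h2 => rw [inner_add_left, h1, h2, add_zero]
      | smul c v _ h1 => rw [real_inner_smul_left, h1, mul_zero]
    have hgV : ∀ k ∈ Finset.range j, g k ∈ V := by
      intro k hk
      have hmem := gramSchmidt_mem_span ℝ f (le_refl k)
      refine Submodule.span_le.mpr ?_ hmem
      rintro v ⟨a, ha, rfl⟩
      exact Submodule.subset_span
        (Or.inl ⟨⟨a, lt_of_le_of_lt ha (Finset.mem_range.mp hk)⟩, rfl⟩)
    have hgnV : ∀ k ∈ Finset.range j, gn k ∈ V := by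
      intro k hk
      rw [hgn_def k]
      exact Submodule.smul_mem _ _ (hgV k hk)
    have hyV : Φ y ∈ V := Submodule.subset_span (Or.inr rfl)
    have huV : u ∈ V := by
      rw [hu]
      exact Submodule.sub_mem _ hyV
        (Submodule.sum_mem _ fun k hk => Submodule.smul_mem _ _ (hgnV k hk))
    have hwV : w ∈ V := by
      rw [hw]; exact Submodule.smul_mem _ _ huV
    have hv0V : v₀ ∈ V := by
      rw [hv0]
      exact Submodule.add_mem _
        (Submodule.sum_mem _ fun k hk => Submodule.smul_mem _ _ (hgnV k hk))
        (Submodule.smul_mem _ _ hwV)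
    -- combinations
    set combo : (Fin j → ℝ) × ℝ → H :=
      fun p => (∑ i, p.1 i • f (i:ℕ)) + p.2 • Φ y with hcombo
    have hcomboV : ∀ p, combo p ∈ V := by
      intro p
      exact Submodule.add_mem _
        (Submodule.sum_mem _ fun i _ => Submodule.smul_mem _ _
          (Submodule.subset_span (Or.inl ⟨i, rfl⟩)))
        (Submodule.smul_mem _ _ hyV)
    have hsurj : ∀ v ∈ V, ∃ p, combo p = v := by
      intro v hv
      induction hv using Submodule.span_induction with
      | mem v hvT =>
        rcases hvT with ⟨i, rfl⟩ | rfl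
        · exact ⟨(Pi.single i 1, 0), by
            simp [hcombo, Pi.single_apply, Finset.sum_ite_eq]⟩
        · exact ⟨(0, 1), by simp [hcombo]⟩
      | zero => exact ⟨(0, 0), by simp [hcombo]⟩
      | add v v' _ _ h1 h2 =>
        obtain ⟨p, hp⟩ := h1
        obtain ⟨q, hq⟩ := h2
        exact ⟨(p.1 + q.1, p.2 + q.2), by
          simp only [hcombo, Pi.add_apply, add_smul, Finset.sum_add_distrib, ← hp, ← hq]
          abel⟩
      | smul c v _ h1 =>
        obtain ⟨p, hp⟩ := h1
        exact ⟨(c • p.1, c * p.2), by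
          simp only [hcombo, Pi.smul_apply, smul_eq_mul, mul_smul, ← Finset.smul_sum, ← hp,
            smul_add]⟩
    -- P y = ‖r‖
    have hPy : P y = ‖r‖ := by
      rw [hP y]
      have hnorm_eq : ∀ p : (Fin j → ℝ) × ℝ,
          ‖InnerProductSpace.toDual ℝ H (Φ z)
            - ∑ i, p.1 i • InnerProductSpace.toDual ℝ H (Φ (x ((i:ℕ) + 1)))
            - p.2 • InnerProductSpace.toDual ℝ H (Φ y)‖ = ‖Φ z - combo p‖ := by
        intro p
        have heq : InnerProductSpace.toDual ℝ H (Φ z)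
            - ∑ i, p.1 i • InnerProductSpace.toDual ℝ H (Φ (x ((i:ℕ) + 1)))
            - p.2 • InnerProductSpace.toDual ℝ H (Φ y)
            = InnerProductSpace.toDual ℝ H (Φ z - combo p) := by
          simp [hcombo, hf, sub_sub, map_sub, map_add, map_sum, map_smul]
        rw [heq, LinearIsometryEquiv.norm_map]
      rw [iInf_congr hnorm_eq]
      have hbdd : BddBelow (Set.range fun p => ‖Φ z - combo p‖) := by
        refine ⟨0, ?_⟩
        rintro _ ⟨p, rfl⟩
        exact norm_nonneg _
      have hlow : ∀ p, ‖r‖ ≤ ‖Φ z - combo p‖ := by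
        intro p
        have hsplit : Φ z - combo p = r + (v₀ - combo p) := by
          rw [hrdef]; abel
        have horth : ⟪r, v₀ - combo p⟫ = 0 := by
          rw [real_inner_comm]
          exact hr_V _ (Submodule.sub_mem _ hv0V (hcomboV p))
        have hsq : ‖Φ z - combo p‖ ^ 2 = ‖r‖ ^ 2 + ‖v₀ - combo p‖ ^ 2 := by
          rw [hsplit, norm_add_sq_real, horth]
          ring
        nlinarith [norm_nonneg (Φ z - combo p), norm_nonneg r,
          sq_nonneg (‖v₀ - combo p‖)]
      refine le_antisymm ?_ (le_ciInf hlow)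
      obtain ⟨p₀, hp₀⟩ := hsurj v₀ hv0V
      have : ‖Φ z - combo p₀‖ = ‖r‖ := by rw [hp₀, hrdef]
      exact this ▸ ciInf_le hbdd p₀
    -- compute ‖r‖²
    have hv0r : ⟪v₀, r⟫ = 0 := hr_V v₀ hv0V
    have hzr : ⟪Φ z, v₀⟫ = ∑ k ∈ Finset.range j, ⟪Φ z, gn k⟫ ^ 2 + ⟪Φ z, w⟫ ^ 2 := by
      rw [hv0, inner_add_right, inner_sum, real_inner_smul_right]
      congr 1
      · exact Finset.sum_congr rfl fun k _ => by rw [real_inner_smul_right]; ring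
      · ring
    have hr2 : ‖r‖ ^ 2 = ⟪Φ z, Φ z⟫ - ∑ k ∈ Finset.range j, ⟪Φ z, gn k⟫ ^ 2
        - ⟪Φ z, w⟫ ^ 2 := by
      rw [← real_inner_self_eq_norm_sq]
      have h1 : ⟪r, r⟫ = ⟪Φ z, r⟫ - ⟪v₀, r⟫ := by
        conv_lhs => rw [hrdef]
        rw [inner_sub_left]
      rw [h1, hv0r, sub_zero, hrdef, inner_sub_right, hzr]
      ring
    have hzw2 : ⟪Φ z, w⟫ ^ 2 = S j z y ^ 2 / S j y y := by
      rw [hzw, mul_pow, ← huu]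
      field_simp
    rw [hPy, hr2, hzw2, hker z z, hsumN j, hKjS j z y, hKjS j y y]
  refine ⟨key, ?_⟩
  intro y y' hy hy' hle
  have h1 := key y hy
  have h2 := key y' hy'
  have hPnonneg : 0 ≤ P y' := by
    rw [hP y']
    exact Real.iInf_nonneg fun p => norm_nonneg _
  have hsq : P y ^ 2 ≤ P y' ^ 2 := by rw [h1, h2]; linarith
  exact le_of_pow_le_pow_left₀ two_ne_zero hPnonneg hsq
end
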